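/- Under the assumption X_t ∧ Y_t ≤ V_t ≤ X_t ∨ Y_t for all t (where V is the backward-induction process for the general discrete-time Dynkin game), the stopped value equals the actual payoff: V_{τ*_t ∧ σ*_t} = R(τ*_t, σ*_t) = X_{τ*_t} 1{τ*_t < σ*_t} + Y_{σ*_t} 1{σ*_t < τ*_t} + Z_{σ*_t} 1{σ*_t = τ*_t}, and hence V_t = E[R(τ*_t, σ*_t) | F_t]. -/

import Mathlib

open MeasureTheory Filter Set

/-- Payoff of the general Dynkin game. -/
noncomputable def payoffD {Ω : Type*} (X Y Z : ℕ → Ω → ℝ) (τ σ : Ω → ℕ) (ω : Ω) : ℝ :=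
  if τ ω < σ ω then X (τ ω) ω else if σ ω < τ ω then Y (σ ω) ω else Z (σ ω) ω

/-- Under the sandwich assumption `X_t ∧ Y_t ≤ V_t ≤ X_t ∨ Y_t` for all `t`, the
backward-induction process `V` of the general discrete-time Dynkin game stopped at
`τ*_t ∧ σ*_t` equals the actual payoff:
`V_{τ*_t ∧ σ*_t} = R(τ*_t, σ*_t)`, and hence `V_t = E[R(τ*_t, σ*_t) | ℱ t]`. -/
theorem stmt10 {Ω : Type*} {m0 : MeasurableSpace Ω} (μ : Measure Ω) [IsProbabilityMeasure μ]
    (ℱ : Filtration ℕ m0) (T : ℕ)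
    (X Y Z V : ℕ → Ω → ℝ)
    (hXa : Adapted ℱ X) (hYa : Adapted ℱ Y) (hZa : Adapted ℱ Z)
    (hXi : ∀ s, Integrable (X s) μ) (hYi : ∀ s, Integrable (Y s) μ)
    (hZi : ∀ s, Integrable (Z s) μ)
    (htermX : ∀ ω, X T ω = Z T ω) (htermY : ∀ ω, Y T ω = Z T ω)
    (hVT : ∀ ω, V T ω = Z T ω)
    (hV : ∀ s, s < T → ∀ ω, V s ω =
      min (max (Y s ω) (Z s ω))
        (max (min (X s ω) (Z s ω)) ((μ[V (s + 1) | ℱ s]) ω)))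
    (hsand : ∀ s, s ≤ T → ∀ᵐ ω ∂μ,
      min (X s ω) (Y s ω) ≤ V s ω ∧ V s ω ≤ max (X s ω) (Y s ω))
    (t : ℕ) (ht : t ≤ T)
    (τs σs : Ω → ℕ)
    (hτs : ∀ ω, τs ω = sInf {u | t ≤ u ∧ u ≤ T ∧ V u ω = min (X u ω) (Z u ω)})
    (hσs : ∀ ω, σs ω = sInf {u | t ≤ u ∧ u ≤ T ∧ V u ω = max (Y u ω) (Z u ω)}) :
    (∀ᵐ ω ∂μ, V (min (τs ω) (σs ω)) ω = payoffD X Y Z τs σs ω) ∧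
    V t =ᵐ[μ] μ[payoffD X Y Z τs σs | ℱ t] := by
  classical
  -- T belongs to both stopping sets
  have hTτ : ∀ ω, T ∈ {u | t ≤ u ∧ u ≤ T ∧ V u ω = min (X u ω) (Z u ω)} := by
    intro ω
    refine ⟨ht, le_rfl, ?_⟩
    rw [hVT ω, htermX ω, min_self]
  have hTσ : ∀ ω, T ∈ {u | t ≤ u ∧ u ≤ T ∧ V u ω = max (Y u ω) (Z u ω)} := by
    intro ω
    refine ⟨ht, le_rfl, ?_⟩
    rw [hVT ω, htermY ω, max_self]
  -- membership / minimality facts for τs and σs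
  have hτmem : ∀ ω, t ≤ τs ω ∧ τs ω ≤ T ∧ V (τs ω) ω = min (X (τs ω) ω) (Z (τs ω) ω) := by
    intro ω
    have := Nat.sInf_mem (s := {u | t ≤ u ∧ u ≤ T ∧ V u ω = min (X u ω) (Z u ω)}) ⟨T, hTτ ω⟩
    rwa [← hτs ω] at this
  have hσmem : ∀ ω, t ≤ σs ω ∧ σs ω ≤ T ∧ V (σs ω) ω = max (Y (σs ω) ω) (Z (σs ω) ω) := by
    intro ω
    have := Nat.sInf_mem (s := {u | t ≤ u ∧ u ≤ T ∧ V u ω = max (Y u ω) (Z u ω)}) ⟨T, hTσ ω⟩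
    rwa [← hσs ω] at this
  have hτle : ∀ ω u, t ≤ u → u ≤ T → V u ω = min (X u ω) (Z u ω) → τs ω ≤ u := by
    intro ω u h1 h2 h3
    rw [hτs ω]
    exact Nat.sInf_le ⟨h1, h2, h3⟩
  have hσle : ∀ ω u, t ≤ u → u ≤ T → V u ω = max (Y u ω) (Z u ω) → σs ω ≤ u := by
    intro ω u h1 h2 h3
    rw [hσs ω]
    exact Nat.sInf_le ⟨h1, h2, h3⟩
  -- regularity of V
  have hVreg : ∀ d s, s + d = T → StronglyMeasurable[ℱ s] (V s) ∧ Integrable (V s) μ := by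
    intro d
    induction d with
    | zero =>
      intro s hs
      have hsT : s = T := by omega
      rw [hsT, funext hVT]
      exact ⟨(hZa T).stronglyMeasurable, hZi T⟩
    | succ d ih =>
      intro s hs
      have h1 := ih (s + 1) (by omega)
      have hVeq : V s = ((Y s ⊔ Z s) ⊓ ((X s ⊓ Z s) ⊔ μ[V (s + 1)|ℱ s])) := by
        funext ω
        simp only [Pi.inf_apply, Pi.sup_apply]
        exact hV s (by omega) ω
      constructor
      · rw [hVeq]
        exact @StronglyMeasurable.inf _ _ _ _ (ℱ s) _ _ _
          (@StronglyMeasurable.sup _ _ _ _ (ℱ s) _ _ _ (hYa s).stronglyMeasurable (hZa s).stronglyMeasurable)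
          (@StronglyMeasurable.sup _ _ _ _ (ℱ s) _ _ _
            (@StronglyMeasurable.inf _ _ _ _ (ℱ s) _ _ _ (hXa s).stronglyMeasurable (hZa s).stronglyMeasurable)
            stronglyMeasurable_condExp)
      · rw [hVeq]
        exact ((hYi s).sup (hZi s)).inf (((hXi s).inf (hZi s)).sup integrable_condExp)
  have hVsm : ∀ s, s ≤ T → StronglyMeasurable[ℱ s] (V s) := fun s hs =>
    (hVreg (T - s) s (by omega)).1
  have hVint : ∀ s, s ≤ T → Integrable (V s) μ := fun s hs => (hVreg (T - s) s (by omega)).2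
  -- combined sandwich
  have hsand' : ∀ᵐ ω ∂μ, ∀ s, s ≤ T →
      min (X s ω) (Y s ω) ≤ V s ω ∧ V s ω ≤ max (X s ω) (Y s ω) := by
    rw [ae_all_iff]
    intro s
    by_cases hs : s ≤ T
    · filter_upwards [hsand s hs] with ω h _
      exact h
    · filter_upwards with ω h
      exact absurd h hs
  -- pointwise payoff identity under the sandwich
  have hpay : ∀ ω, (∀ s, s ≤ T →
      min (X s ω) (Y s ω) ≤ V s ω ∧ V s ω ≤ max (X s ω) (Y s ω)) →
      V (min (τs ω) (σs ω)) ω = payoffD X Y Z τs σs ω := by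
    intro ω hsw
    obtain ⟨hτ1, hτ2, hτ3⟩ := hτmem ω
    obtain ⟨hσ1, hσ2, hσ3⟩ := hσmem ω
    rcases lt_trichotomy (τs ω) (σs ω) with h | h | h
    · rw [min_eq_left h.le]
      simp only [payoffD, if_pos h]
      by_contra hne
      have hZX : Z (τs ω) ω < X (τs ω) ω := by
        rcases le_or_gt (X (τs ω) ω) (Z (τs ω) ω) with hxz | hxz
        · exact absurd (hτ3.trans (min_eq_left hxz)) hne
        · exact hxz
      have hVZ : V (τs ω) ω = Z (τs ω) ω := hτ3.trans (min_eq_right hZX.le)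
      have hYZ : Y (τs ω) ω ≤ Z (τs ω) ω := by
        have h1 := (hsw (τs ω) hτ2).1
        rw [hVZ] at h1
        exact (min_le_iff.mp h1).resolve_left (not_le.mpr hZX)
      have : σs ω ≤ τs ω := hσle ω (τs ω) hτ1 hτ2 (by rw [hVZ, max_eq_right hYZ])
      omega
    · have hminσ : min (τs ω) (σs ω) = σs ω := by rw [h, min_self]
      rw [hminσ]
      simp only [payoffD, if_neg (by omega : ¬ τs ω < σs ω),
        if_neg (by omega : ¬ σs ω < τs ω)]
      have hτ3' : V (σs ω) ω = min (X (σs ω) ω) (Z (σs ω) ω) := by rw [← h]; exact hτ3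
      exact le_antisymm (hτ3' ▸ min_le_right _ _) (hσ3 ▸ le_max_right _ _)
    · rw [min_eq_right h.le]
      simp only [payoffD, if_neg (by omega : ¬ τs ω < σs ω), if_pos h]
      by_contra hne
      have hYZ : Y (σs ω) ω < Z (σs ω) ω := by
        rcases le_or_gt (Z (σs ω) ω) (Y (σs ω) ω) with hzy | hzy
        · exact absurd (hσ3.trans (max_eq_left hzy)) hne
        · exact hzy
      have hVZ : V (σs ω) ω = Z (σs ω) ω := hσ3.trans (max_eq_right hYZ.le)
      have hXZ : Z (σs ω) ω ≤ X (σs ω) ω := by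
        have h1 := (hsw (σs ω) hσ2).2
        rw [hVZ] at h1
        exact (le_max_iff.mp h1).resolve_right (not_le.mpr hYZ)
      have : τs ω ≤ σs ω := hτle ω (σs ω) hσ1 hσ2 (by rw [hVZ, min_eq_right hXZ])
      omega
  have hpaya : ∀ᵐ ω ∂μ, V (min (τs ω) (σs ω)) ω = payoffD X Y Z τs σs ω := by
    filter_upwards [hsand'] with ω h
    exact hpay ω h
  refine ⟨hpaya, ?_⟩
  -- the stopped time
  set ρ : Ω → ℕ := fun ω => min (τs ω) (σs ω) with hρdef
  have hρt : ∀ ω, t ≤ ρ ω := fun ω => le_min (hτmem ω).1 (hσmem ω).1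
  have hρT : ∀ ω, ρ ω ≤ T := fun ω => le_trans (min_le_left _ _) (hτmem ω).2.1
  -- measurability of the event {s < ρ}
  have hAτ : ∀ s, s ≤ T → MeasurableSet[ℱ s] {ω | s < τs ω} := by
    intro s hs
    have hset : {ω | s < τs ω} =
        ⋂ u ∈ Finset.Icc t s, {ω | V u ω = min (X u ω) (Z u ω)}ᶜ := by
      ext ω
      simp only [mem_setOf_eq, mem_iInter, Finset.mem_Icc, mem_compl_iff]
      constructor
      · rintro h u ⟨hu1, hu2⟩ heq
        exact absurd (hτle ω u hu1 (hu2.trans hs) heq) (by omega)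
      · intro h
        by_contra hc
        push_neg at hc
        obtain ⟨h1, h2, h3⟩ := hτmem ω
        exact h (τs ω) ⟨h1, by omega⟩ h3
    rw [hset]
    refine MeasurableSet.biInter (Finset.Icc t s).countable_toSet fun u hu => ?_
    have hu2 : u ≤ s := (Finset.mem_Icc.mp hu).2
    have hm : MeasurableSet[ℱ s] {ω | V u ω = min (X u ω) (Z u ω)} := by
      refine MeasureTheory.StronglyMeasurable.measurableSet_eq_fun
        ((hVsm u (hu2.trans hs)).mono (ℱ.mono hu2)) ?_
      have h1 : StronglyMeasurable[ℱ u] fun ω => min (X u ω) (Z u ω) :=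
        @StronglyMeasurable.inf _ _ _ _ (ℱ u) _ _ _ (hXa u).stronglyMeasurable (hZa u).stronglyMeasurable
      exact h1.mono (ℱ.mono hu2)
    exact hm.compl
  have hAσ : ∀ s, s ≤ T → MeasurableSet[ℱ s] {ω | s < σs ω} := by
    intro s hs
    have hset : {ω | s < σs ω} =
        ⋂ u ∈ Finset.Icc t s, {ω | V u ω = max (Y u ω) (Z u ω)}ᶜ := by
      ext ω
      simp only [mem_setOf_eq, mem_iInter, Finset.mem_Icc, mem_compl_iff]
      constructor
      · rintro h u ⟨hu1, hu2⟩ heq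
        exact absurd (hσle ω u hu1 (hu2.trans hs) heq) (by omega)
      · intro h
        by_contra hc
        push_neg at hc
        obtain ⟨h1, h2, h3⟩ := hσmem ω
        exact h (σs ω) ⟨h1, by omega⟩ h3
    rw [hset]
    refine MeasurableSet.biInter (Finset.Icc t s).countable_toSet fun u hu => ?_
    have hu2 : u ≤ s := (Finset.mem_Icc.mp hu).2
    have hm : MeasurableSet[ℱ s] {ω | V u ω = max (Y u ω) (Z u ω)} := by
      refine MeasureTheory.StronglyMeasurable.measurableSet_eq_fun
        ((hVsm u (hu2.trans hs)).mono (ℱ.mono hu2)) ?_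
      have h1 : StronglyMeasurable[ℱ u] fun ω => max (Y u ω) (Z u ω) :=
        @StronglyMeasurable.sup _ _ _ _ (ℱ u) _ _ _ (hYa u).stronglyMeasurable (hZa u).stronglyMeasurable
      exact h1.mono (ℱ.mono hu2)
    exact hm.compl
  have hA : ∀ s, s ≤ T → MeasurableSet[ℱ s] {ω | s < ρ ω} := by
    intro s hs
    have : {ω | s < ρ ω} = {ω | s < τs ω} ∩ {ω | s < σs ω} := by
      ext ω; simp [hρdef, lt_min_iff]
    rw [this]
    exact (hAτ s hs).inter (hAσ s hs)
  -- one-step decomposition of the stopped process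
  have hWsucc : ∀ s ω, V (min (ρ ω) (s + 1)) ω = V (min (ρ ω) s) ω +
      ({ω | s < ρ ω}).indicator (V (s + 1) - V s) ω := by
    intro s ω
    by_cases h : s < ρ ω
    · rw [Set.indicator_of_mem (show ω ∈ {ω' | s < ρ ω'} from h),
        min_eq_right (by omega : s + 1 ≤ ρ ω), min_eq_right (by omega : s ≤ ρ ω),
        Pi.sub_apply]
      ring
    · rw [Set.indicator_of_notMem (show ω ∉ {ω' | s < ρ ω'} from h),
        min_eq_left (by omega : ρ ω ≤ s), min_eq_left (by omega : ρ ω ≤ s + 1)]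
      ring
  -- regularity of the stopped process
  have hWreg : ∀ s, t ≤ s → s ≤ T →
      StronglyMeasurable[ℱ s] (fun ω => V (min (ρ ω) s) ω) ∧
      Integrable (fun ω => V (min (ρ ω) s) ω) μ := by
    intro s hts
    induction s, hts using Nat.le_induction with
    | base =>
      intro _
      have heq : (fun ω => V (min (ρ ω) t) ω) = V t :=
        funext fun ω => by rw [min_eq_right (hρt ω)]
      rw [heq]
      exact ⟨hVsm t ht, hVint t ht⟩
    | succ s hs ih =>
      intro hs1
      have hsT : s ≤ T := by omega
      have ihs := ih hsT
      have heq : (fun ω => V (min (ρ ω) (s + 1)) ω) =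
          (fun ω => V (min (ρ ω) s) ω) +
          ({ω | s < ρ ω}).indicator (V (s + 1) - V s) :=
        funext fun ω => hWsucc s ω
      rw [heq]
      constructor
      · exact (ihs.1.mono (ℱ.mono (by omega))).add
          (((hVsm (s + 1) hs1).sub ((hVsm s hsT).mono (ℱ.mono (by omega)))).indicator
            ((ℱ.mono (by omega) _ (hA s hsT))))
      · exact ihs.2.add
          (((hVint (s + 1) hs1).sub (hVint s hsT)).indicator (ℱ.le s _ (hA s hsT)))
  -- martingale step
  have hstep : ∀ s, t ≤ s → s < T →
      μ[(fun ω => V (min (ρ ω) (s + 1)) ω)|ℱ s] =ᵐ[μ] fun ω => V (min (ρ ω) s) ω := by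
    intro s hts hsT
    have hAs := hA s hsT.le
    have heq : (fun ω => V (min (ρ ω) (s + 1)) ω) =
        (fun ω => V (min (ρ ω) s) ω) +
        ({ω | s < ρ ω}).indicator (V (s + 1) - V s) :=
      funext fun ω => hWsucc s ω
    rw [heq]
    have hWint := (hWreg s hts hsT.le).2
    have hWsm := (hWreg s hts hsT.le).1
    have hsubint : Integrable (V (s + 1) - V s) μ :=
      (hVint (s + 1) hsT).sub (hVint s hsT.le)
    have hindint : Integrable
        (({ω | s < ρ ω}).indicator (V (s + 1) - V s)) μ :=
      hsubint.indicator (ℱ.le s _ hAs)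
    have hW : μ[(fun ω => V (min (ρ ω) s) ω)|ℱ s] = fun ω => V (min (ρ ω) s) ω :=
      condExp_of_stronglyMeasurable (ℱ.le s) hWsm hWint
    have hVss : μ[V s|ℱ s] = V s :=
      condExp_of_stronglyMeasurable (ℱ.le s) (hVsm s hsT.le) (hVint s hsT.le)
    -- on the event, the conditional expectation of V (s+1) equals V s
    have h0 : ∀ ω, s < ρ ω → (μ[V (s + 1)|ℱ s]) ω = V s ω := by
      intro ω hω
      have hρτ : ρ ω ≤ τs ω := min_le_left _ _
      have hρσ : ρ ω ≤ σs ω := min_le_right _ _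
      have hnL : V s ω ≠ min (X s ω) (Z s ω) := by
        intro hc
        have := hτle ω s hts hsT.le hc
        omega
      have hnU : V s ω ≠ max (Y s ω) (Z s ω) := by
        intro hc
        have := hσle ω s hts hsT.le hc
        omega
      have hv := hV s hsT ω
      rcases min_cases (max (Y s ω) (Z s ω))
          (max (min (X s ω) (Z s ω)) ((μ[V (s + 1)|ℱ s]) ω)) with ⟨h1, _⟩ | ⟨h1, _⟩
      · exact absurd (hv.trans h1) hnU
      · rw [h1] at hv
        rcases max_cases (min (X s ω) (Z s ω)) ((μ[V (s + 1)|ℱ s]) ω) with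
          ⟨h2, _⟩ | ⟨h2, _⟩
        · exact absurd (hv.trans h2) hnL
        · rw [hv, h2]
    filter_upwards [condExp_add hWint hindint (m := ℱ s),
      condExp_indicator hsubint hAs,
      condExp_sub (hVint (s + 1) hsT) (hVint s hsT.le) (m := ℱ s)] with ω hadd hind hsub
    rw [hadd, Pi.add_apply, hW, hind]
    by_cases hω : ω ∈ {ω | s < ρ ω}
    · rw [Set.indicator_of_mem hω, hsub, Pi.sub_apply, hVss, h0 ω hω]
      ring
    · rw [Set.indicator_of_notMem hω]
      ring
  -- tower property
  have htower : ∀ u, t ≤ u → u ≤ T →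
      μ[(fun ω => V (min (ρ ω) u) ω)|ℱ t] =ᵐ[μ] V t := by
    intro u htu
    induction u, htu using Nat.le_induction with
    | base =>
      intro _
      have heq : (fun ω => V (min (ρ ω) t) ω) = V t :=
        funext fun ω => by rw [min_eq_right (hρt ω)]
      rw [heq, condExp_of_stronglyMeasurable (ℱ.le t) (hVsm t ht) (hVint t ht)]
    | succ u hu ih =>
      intro hu1
      have h1 : μ[(fun ω => V (min (ρ ω) (u + 1)) ω)|ℱ t] =ᵐ[μ]
          μ[μ[(fun ω => V (min (ρ ω) (u + 1)) ω)|ℱ u]|ℱ t] :=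
        (condExp_condExp_of_le (ℱ.mono hu) (ℱ.le u)).symm
      have h2 := condExp_congr_ae (m := ℱ t) (μ := μ) (hstep u hu (by omega))
      exact h1.trans (h2.trans (ih (by omega)))
  -- conclusion
  have hfin := htower T ht le_rfl
  have hWT : (fun ω => V (min (ρ ω) T) ω) =ᵐ[μ] payoffD X Y Z τs σs := by
    filter_upwards [hpaya] with ω h
    rw [min_eq_left (hρT ω)]
    exact h
  exact hfin.symm.trans (condExp_congr_ae hWT)
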